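/- For real numbers 0 < a < b, ∫_a^b ln(x)·√((b−x)(x−a)) dx = (π/16)(a² + 6ab + b² − 4√(ab)(a+b) − 4(a−b)²ln 2 + 2(a−b)²ln(a+b+2√(ab))). -/

import Mathlib

open MeasureTheory Set Filter Real Topology intervalIntegral

lemma inv_shift_tendsto (x : ℝ) : Tendsto (fun t : ℝ => (x + t)⁻¹) atTop (𝓝 0) :=
  (tendsto_atTop_add_const_left _ x tendsto_id).inv_tendsto_atTop

lemma invsq_integrable (m : ℝ) (hm : 0 < m) :
    IntegrableOn (fun t : ℝ => ((m + t) ^ 2)⁻¹) (Ioi 0) := by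
  have h : ∀ t ∈ Ici (0:ℝ), HasDerivAt (fun t : ℝ => -(m + t)⁻¹) ((m + t) ^ 2)⁻¹ t := by
    intro t ht
    simp only [mem_Ici] at ht
    have h0 : m + t ≠ 0 := by nlinarith
    have := (((hasDerivAt_id t).const_add m).inv h0).neg
    refine this.congr_deriv ?_
    simp only [id_eq]
    field_simp
  exact integrableOn_Ioi_deriv_of_nonneg' h (fun t ht => by positivity)
    (by simpa using (inv_shift_tendsto m).neg)

lemma ratio_tendsto (x : ℝ) : Tendsto (fun t : ℝ => (1 + t) / (x + t)) atTop (𝓝 1) := by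
  have h0 := (inv_shift_tendsto x).const_mul (1 - x)
  have h1 : Tendsto (fun t : ℝ => 1 + (1 - x) * (x + t)⁻¹) atTop (𝓝 1) := by
    simpa using h0.const_add 1
  apply h1.congr'
  filter_upwards [eventually_gt_atTop (max 0 (-x))] with t ht
  have hxt : x + t > 0 := by have := lt_of_le_of_lt (le_max_right 0 (-x)) ht; linarith
  field_simp
  ring

lemma log_as_integral (x : ℝ) (hx : 0 < x) :
    ∫ t in Ioi (0:ℝ), ((1 + t)⁻¹ - (x + t)⁻¹) = Real.log x := by
  set F : ℝ → ℝ := fun t => Real.log (1 + t) - Real.log (x + t) with hF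
  have hderiv : ∀ t ∈ Ici (0:ℝ), HasDerivAt F ((1 + t)⁻¹ - (x + t)⁻¹) t := by
    intro t ht
    simp only [mem_Ici] at ht
    have h1 : (1:ℝ) + t ≠ 0 := by nlinarith
    have h2 : x + t ≠ 0 := by nlinarith
    have d1 : HasDerivAt (fun t : ℝ => Real.log (1 + t)) (1 + t)⁻¹ t := by
      simpa using (((hasDerivAt_id t).const_add 1).log h1)
    have d2 : HasDerivAt (fun t : ℝ => Real.log (x + t)) (x + t)⁻¹ t := by
      simpa using (((hasDerivAt_id t).const_add x).log h2)
    exact d1.sub d2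
  have hlim : Tendsto F atTop (𝓝 0) := by
    have heq : ∀ᶠ t in atTop, Real.log ((1 + t) / (x + t)) = F t := by
      filter_upwards [eventually_gt_atTop 0] with t ht
      rw [Real.log_div (by nlinarith) (by nlinarith)]
    have := (Real.continuousAt_log one_ne_zero).tendsto.comp (ratio_tendsto x)
    simp only [Function.comp, Real.log_one] at this
    exact this.congr' heq
  -- integrability of the derivative
  have hint : IntegrableOn (fun t : ℝ => (1 + t)⁻¹ - (x + t)⁻¹) (Ioi 0) := by
    rcases le_or_gt 1 x with hx1 | hx1
    · exact integrableOn_Ioi_deriv_of_nonneg' hderiv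
        (fun t ht => by
          have ht0 : (0:ℝ) < t := ht
          have : (0:ℝ) < 1 + t := by linarith
          have : (0:ℝ) < x + t := by linarith
          have := inv_anti₀ (by linarith : (0:ℝ) < 1 + t) (by linarith : 1 + t ≤ x + t)
          linarith) hlim
    · have := integrableOn_Ioi_deriv_of_nonpos' hderiv
        (fun t ht => by
          have ht0 : (0:ℝ) < t := ht
          have : (0:ℝ) < x + t := by linarith
          have := inv_anti₀ (by linarith : (0:ℝ) < x + t) (by linarith : x + t ≤ 1 + t)
          linarith) hlim
      exact this
  have := integral_Ioi_of_hasDerivAt_of_tendsto' hderiv hint hlim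
  rw [this]
  simp [hF, Real.log_one]

-- derivative of x ↦ √((b-x)(x-a)) on the open interval
lemma sqrtQ_hasDeriv (a b x : ℝ) (hax : a < x) (hxb : x < b) :
    HasDerivAt (fun y : ℝ => Real.sqrt ((b - y) * (y - a)))
      ((a + b - 2 * x) / (2 * Real.sqrt ((b - x) * (x - a)))) x := by
  have hQ : HasDerivAt (fun y : ℝ => (b - y) * (y - a))
      ((-1) * (x - a) + (b - x) * 1) x := by
    exact (((hasDerivAt_id x).const_sub b)).mul ((hasDerivAt_id x).sub_const a)
  have hQ0 : (b - x) * (x - a) ≠ 0 := by nlinarith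
  have := hQ.sqrt hQ0
  convert this using 1
  ring

-- derivative of x ↦ arcsin ((2x-a-b)/(b-a)) on the open interval
lemma arcsin1_hasDeriv (a b x : ℝ) (hax : a < x) (hxb : x < b) :
    HasDerivAt (fun y : ℝ => Real.arcsin ((2 * y - a - b) / (b - a)))
      (1 / Real.sqrt ((b - x) * (x - a))) x := by
  have hba : (0:ℝ) < b - a := by linarith
  set φ := (2 * x - a - b) / (b - a) with hφ
  have hs : (0:ℝ) < Real.sqrt ((b - x) * (x - a)) := Real.sqrt_pos.2 (by nlinarith)
  have hs2 : Real.sqrt ((b - x) * (x - a)) ^ 2 = (b - x) * (x - a) :=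
    Real.sq_sqrt (by nlinarith)
  have hkey : 1 - φ ^ 2 = (2 * Real.sqrt ((b - x) * (x - a)) / (b - a)) ^ 2 := by
    rw [hφ]; field_simp; nlinarith [hs2]
  have hφ1 : φ ≠ 1 := by
    intro h
    have : 1 - φ ^ 2 = 0 := by rw [h]; ring
    rw [hkey] at this
    have : 2 * Real.sqrt ((b - x) * (x - a)) / (b - a) ≠ 0 := by positivity
    simp [pow_eq_zero_iff] at *; tauto
  have hφm1 : φ ≠ -1 := by
    intro h
    have : 1 - φ ^ 2 = 0 := by rw [h]; ring
    rw [hkey] at this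
    have : 2 * Real.sqrt ((b - x) * (x - a)) / (b - a) ≠ 0 := by positivity
    simp [pow_eq_zero_iff] at *; tauto
  have hinner : HasDerivAt (fun y : ℝ => (2 * y - a - b) / (b - a)) (2 / (b - a)) x := by
    have : HasDerivAt (fun y : ℝ => 2 * y - a - b) 2 x := by
      simpa using (((hasDerivAt_id x).const_mul 2).sub_const a).sub_const b
    convert this.div_const (b - a) using 1
  have := (Real.hasDerivAt_arcsin hφm1 hφ1).comp x hinner
  refine this.congr_deriv ?_
  rw [hkey, Real.sqrt_sq (by positivity)]
  field_simp

-- derivative of the third term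
lemma arcsin2_hasDeriv (a b t x : ℝ) (h0 : 0 < a) (hax : a < x) (hxb : x < b) (ht : 0 ≤ t) :
    HasDerivAt (fun y : ℝ =>
        Real.arcsin (((a + t) * (y - b) + (b + t) * (y - a)) / ((b - a) * (y + t))))
      (Real.sqrt ((a + t) * (b + t)) / ((x + t) * Real.sqrt ((b - x) * (x - a)))) x := by
  have hba : (0:ℝ) < b - a := by linarith
  have hxt : (0:ℝ) < x + t := by linarith
  have hs : (0:ℝ) < Real.sqrt ((b - x) * (x - a)) := Real.sqrt_pos.2 (by nlinarith)
  have hs2 : Real.sqrt ((b - x) * (x - a)) ^ 2 = (b - x) * (x - a) :=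
    Real.sq_sqrt (by nlinarith)
  have hw : (0:ℝ) < Real.sqrt ((a + t) * (b + t)) := Real.sqrt_pos.2 (by nlinarith)
  have hw2 : Real.sqrt ((a + t) * (b + t)) ^ 2 = (a + t) * (b + t) :=
    Real.sq_sqrt (by nlinarith)
  set s := Real.sqrt ((b - x) * (x - a))
  set w := Real.sqrt ((a + t) * (b + t))
  set φ := ((a + t) * (x - b) + (b + t) * (x - a)) / ((b - a) * (x + t)) with hφdef
  have hkey : 1 - φ ^ 2 = (2 * w * s / ((b - a) * (x + t))) ^ 2 := by
    rw [hφdef]; field_simp; nlinarith [hs2, hw2, sq_nonneg (s*w)]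
  have hpos : (0:ℝ) < 2 * w * s / ((b - a) * (x + t)) := by positivity
  have hφ1 : φ ≠ 1 := by
    intro h
    have h2 : 1 - φ ^ 2 = 0 := by rw [h]; ring
    rw [hkey] at h2
    exact absurd h2 (by positivity)
  have hφm1 : φ ≠ -1 := by
    intro h
    have h2 : 1 - φ ^ 2 = 0 := by rw [h]; ring
    rw [hkey] at h2
    exact absurd h2 (by positivity)
  have hN : HasDerivAt (fun y : ℝ => (a + t) * (y - b) + (b + t) * (y - a))
      ((a + t) + (b + t)) x := by
    have h1 := ((hasDerivAt_id x).sub_const b).const_mul (a + t)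
    have h2 := ((hasDerivAt_id x).sub_const a).const_mul (b + t)
    exact (h1.add h2).congr_deriv (by ring)
  have hD : HasDerivAt (fun y : ℝ => (b - a) * (y + t)) (b - a) x := by
    simpa using ((hasDerivAt_id x).add_const t).const_mul (b - a)
  have hD0 : (b - a) * (x + t) ≠ 0 := by positivity
  have hφderiv := hN.div hD hD0
  have := (Real.hasDerivAt_arcsin hφm1 hφ1).comp x hφderiv
  refine this.congr_deriv ?_
  rw [hkey, Real.sqrt_sq hpos.le]
  rw [div_mul_div_comm, one_mul]
  rw [show ((a + t + (b + t)) * ((b - a) * (x + t)) -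
      ((a + t) * (x - b) + (b + t) * (x - a)) * (b - a)) = (b - a) * (2 * ((a+t)*(b+t))) by ring]
  rw [← hw2]
  field_simp

lemma K_eval (a b t : ℝ) (h0 : 0 < a) (hab : a < b) (ht : 0 ≤ t) :
    ∫ x in a..b, Real.sqrt ((b - x) * (x - a)) / (x + t) =
      Real.pi * ((a + b) / 2 + t - Real.sqrt ((a + t) * (b + t))) := by
  have hba : (0:ℝ) < b - a := by linarith
  set w := Real.sqrt ((a + t) * (b + t)) with hw
  set H : ℝ → ℝ := fun y =>
    Real.sqrt ((b - y) * (y - a)) + ((a + b) / 2 + t) * Real.arcsin ((2 * y - a - b) / (b - a))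
      - w * Real.arcsin (((a + t) * (y - b) + (b + t) * (y - a)) / ((b - a) * (y + t))) with hH
  have hc1 : Continuous fun y : ℝ => Real.sqrt ((b - y) * (y - a)) :=
    Real.continuous_sqrt.comp (by continuity)
  have hcont : ContinuousOn H (Icc a b) := by
    apply ContinuousOn.sub
    · apply ContinuousOn.add hc1.continuousOn
      exact (continuous_const.mul (Real.continuous_arcsin.comp (by continuity))).continuousOn
    · apply ContinuousOn.mul continuousOn_const
      apply Real.continuous_arcsin.comp_continuousOn
      apply ContinuousOn.div
      · exact Continuous.continuousOn (by continuity)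
      · exact Continuous.continuousOn (by continuity)
      · intro y hy
        simp only [mem_Icc] at hy
        have h1 : 0 < y + t := by nlinarith [hy.1]
        positivity
  have hderiv : ∀ x ∈ Ioo a b, HasDerivWithinAt H
      (Real.sqrt ((b - x) * (x - a)) / (x + t)) (Ioi x) x := by
    intro x hx
    obtain ⟨hax, hxb⟩ := hx
    have hxt : (0:ℝ) < x + t := by linarith
    have hs : (0:ℝ) < Real.sqrt ((b - x) * (x - a)) := Real.sqrt_pos.2 (by nlinarith)
    have hs2 : Real.sqrt ((b - x) * (x - a)) ^ 2 = (b - x) * (x - a) :=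
      Real.sq_sqrt (by nlinarith)
    have hw2 : w ^ 2 = (a + t) * (b + t) := Real.sq_sqrt (by nlinarith)
    have h1 := sqrtQ_hasDeriv a b x hax hxb
    have h2 := (arcsin1_hasDeriv a b x hax hxb).const_mul ((a + b) / 2 + t)
    have h3 := (arcsin2_hasDeriv a b t x h0 hax hxb ht).const_mul w
    have hsum := (h1.add h2).sub h3
    have heq : (a + b - 2 * x) / (2 * Real.sqrt ((b - x) * (x - a)))
        + ((a + b) / 2 + t) * (1 / Real.sqrt ((b - x) * (x - a)))
        - w * (w / ((x + t) * Real.sqrt ((b - x) * (x - a))))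
        = Real.sqrt ((b - x) * (x - a)) / (x + t) := by
      set s := Real.sqrt ((b - x) * (x - a))
      field_simp
      linear_combination (-2) * hs2 - 2 * hw2
    rw [← hw, heq] at hsum
    exact hsum.hasDerivWithinAt
  have hint : IntervalIntegrable (fun x => Real.sqrt ((b - x) * (x - a)) / (x + t))
      volume a b := by
    apply ContinuousOn.intervalIntegrable
    rw [uIcc_of_le hab.le]
    apply ContinuousOn.div hc1.continuousOn (Continuous.continuousOn (by continuity))
    intro y hy
    simp only [mem_Icc] at hy
    nlinarith [hy.1]
  have hFTC := integral_eq_sub_of_hasDeriv_right_of_le hab.le hcont hderiv hint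
  rw [hFTC, hH]
  simp only
  have e1 : (2 * b - a - b) / (b - a) = 1 := by
    rw [show 2 * b - a - b = b - a by ring, div_self hba.ne']
  have e2 : (2 * a - a - b) / (b - a) = -1 := by
    rw [show 2 * a - a - b = -(b - a) by ring, neg_div, div_self hba.ne']
  have e3 : ((a + t) * (b - b) + (b + t) * (b - a)) / ((b - a) * (b + t)) = 1 := by
    rw [show (a + t) * (b - b) + (b + t) * (b - a) = (b - a) * (b + t) by ring]
    exact div_self (ne_of_gt (by nlinarith))
  have e4 : ((a + t) * (a - b) + (b + t) * (a - a)) / ((b - a) * (a + t)) = -1 := by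
    rw [show (a + t) * (a - b) + (b + t) * (a - a) = -((b - a) * (a + t)) by ring, neg_div]
    rw [div_self (ne_of_gt (by nlinarith))]
  rw [e1, e2, e3, e4, Real.arcsin_one, Real.arcsin_neg_one]
  rw [show (b - b) * (b - a) = 0 by ring, show (b - a) * (a - a) = 0 by ring, Real.sqrt_zero]
  ring

lemma M_eval (a b : ℝ) (hab : a < b) :
    ∫ x in a..b, Real.sqrt ((b - x) * (x - a)) = Real.pi * (b - a) ^ 2 / 8 := by
  have hba : (0:ℝ) < b - a := by linarith
  set S : ℝ → ℝ := fun y =>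
    (2 * y - a - b) / 4 * Real.sqrt ((b - y) * (y - a))
      + (b - a) ^ 2 / 8 * Real.arcsin ((2 * y - a - b) / (b - a)) with hS
  have hc1 : Continuous fun y : ℝ => Real.sqrt ((b - y) * (y - a)) :=
    Real.continuous_sqrt.comp (by continuity)
  have hcont : ContinuousOn S (Icc a b) := by
    apply ContinuousOn.add
    · exact ((Continuous.div_const (by continuity) 4).mul hc1).continuousOn
    · exact (continuous_const.mul (Real.continuous_arcsin.comp (by continuity))).continuousOn
  have hderiv : ∀ x ∈ Ioo a b, HasDerivWithinAt S
      (Real.sqrt ((b - x) * (x - a))) (Ioi x) x := by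
    intro x hx
    obtain ⟨hax, hxb⟩ := hx
    have hs : (0:ℝ) < Real.sqrt ((b - x) * (x - a)) := Real.sqrt_pos.2 (by nlinarith)
    have hs2 : Real.sqrt ((b - x) * (x - a)) ^ 2 = (b - x) * (x - a) :=
      Real.sq_sqrt (by nlinarith)
    have hl : HasDerivAt (fun y : ℝ => (2 * y - a - b) / 4) (2 / 4) x := by
      simpa using (((hasDerivAt_id x).const_mul 2).sub_const a).sub_const b |>.div_const 4
    have h1 := hl.mul (sqrtQ_hasDeriv a b x hax hxb)
    have h2 := (arcsin1_hasDeriv a b x hax hxb).const_mul ((b - a) ^ 2 / 8)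
    have hsum := h1.add h2
    have heq : 2 / 4 * Real.sqrt ((b - x) * (x - a))
        + (2 * x - a - b) / 4 * ((a + b - 2 * x) / (2 * Real.sqrt ((b - x) * (x - a))))
        + (b - a) ^ 2 / 8 * (1 / Real.sqrt ((b - x) * (x - a)))
        = Real.sqrt ((b - x) * (x - a)) := by
      set s := Real.sqrt ((b - x) * (x - a))
      field_simp
      linear_combination (-32) * hs2
    rw [heq] at hsum
    exact hsum.hasDerivWithinAt
  have hint : IntervalIntegrable (fun x => Real.sqrt ((b - x) * (x - a))) volume a b :=
    hc1.intervalIntegrable a b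
  have hFTC := integral_eq_sub_of_hasDeriv_right_of_le hab.le hcont hderiv hint
  rw [hFTC, hS]
  simp only
  have e1 : (2 * b - a - b) / (b - a) = 1 := by
    rw [show 2 * b - a - b = b - a by ring, div_self hba.ne']
  have e2 : (2 * a - a - b) / (b - a) = -1 := by
    rw [show 2 * a - a - b = -(b - a) by ring, neg_div, div_self hba.ne']
  rw [e1, e2, Real.arcsin_one, Real.arcsin_neg_one]
  rw [show (b - b) * (b - a) = 0 by ring, show (b - a) * (a - a) = 0 by ring, Real.sqrt_zero]
  ring

lemma ratio_tendsto' (x y : ℝ) : Tendsto (fun t : ℝ => (x + t) / (y + t)) atTop (𝓝 1) := by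
  have h0 := (inv_shift_tendsto y).const_mul (x - y)
  have h1 : Tendsto (fun t : ℝ => 1 + (x - y) * (y + t)⁻¹) atTop (𝓝 1) := by
    simpa using h0.const_add 1
  apply h1.congr'
  filter_upwards [eventually_gt_atTop (max 0 (-y))] with t ht
  have hyt : y + t > 0 := by have := lt_of_le_of_lt (le_max_right 0 (-y)) ht; linarith
  field_simp
  ring

lemma E_eval (a b : ℝ) (h0 : 0 < a) (hab : a < b)
    (hint : IntegrableOn (fun t : ℝ =>
      (b - a) ^ 2 / 8 * (1 + t)⁻¹ - ((a + b) / 2 + t) + Real.sqrt ((a + t) * (b + t)))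
      (Ioi 0)) :
    ∫ t in Ioi (0:ℝ),
        ((b - a) ^ 2 / 8 * (1 + t)⁻¹ - ((a + b) / 2 + t) + Real.sqrt ((a + t) * (b + t)))
      = (-((b - a) ^ 2 / 8) * Real.log 2 + (a + b) ^ 2 / 8 - (b - a) ^ 2 / 16)
        - ((a + b) / 4 * Real.sqrt (a * b)
            - (b - a) ^ 2 / 8 * Real.log ((a + b) / 2 + Real.sqrt (a * b))) := by
  set c := (a + b) / 2 with hc
  set P : ℝ → ℝ := fun t =>
    (b - a) ^ 2 / 8 * Real.log (1 + t) - (c * t + t ^ 2 / 2)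
      + (c + t) / 2 * Real.sqrt ((a + t) * (b + t))
      - (b - a) ^ 2 / 8 * Real.log (c + t + Real.sqrt ((a + t) * (b + t))) with hP
  have hderiv : ∀ t ∈ Ici (0:ℝ), HasDerivAt P
      ((b - a) ^ 2 / 8 * (1 + t)⁻¹ - (c + t) + Real.sqrt ((a + t) * (b + t))) t := by
    intro t ht
    simp only [mem_Ici] at ht
    have hat : (0:ℝ) < a + t := by linarith
    have hbt : (0:ℝ) < b + t := by linarith
    have hq : (0:ℝ) < Real.sqrt ((a + t) * (b + t)) := Real.sqrt_pos.2 (mul_pos hat hbt)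
    have hq2 : Real.sqrt ((a + t) * (b + t)) ^ 2 = (a + t) * (b + t) :=
      Real.sq_sqrt (mul_pos hat hbt).le
    set q := Real.sqrt ((a + t) * (b + t)) with hqdef
    -- derivative of sqrt((a+t)(b+t))
    have hW : HasDerivAt (fun t : ℝ => (a + t) * (b + t)) ((a + t) + (b + t)) t := by
      have := ((hasDerivAt_id t).const_add a).mul ((hasDerivAt_id t).const_add b)
      exact this.congr_deriv (by simp only [id]; ring)
      -- (a+t)' (b+t) + (a+t)(b+t)' = (b+t)+(a+t)
    have hsq : HasDerivAt (fun t : ℝ => Real.sqrt ((a + t) * (b + t)))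
        (((a + t) + (b + t)) / (2 * q)) t := hW.sqrt (mul_pos hat hbt).ne'
    have d1 : HasDerivAt (fun t : ℝ => (b - a) ^ 2 / 8 * Real.log (1 + t))
        ((b - a) ^ 2 / 8 * (1 + t)⁻¹) t := by
      have hl : HasDerivAt (fun t : ℝ => Real.log (1 + t)) (1 + t)⁻¹ t := by
        simpa using ((hasDerivAt_id t).const_add 1).log (ne_of_gt (show (0:ℝ) < 1 + id t by simp only [id_eq]; linarith))
      exact hl.const_mul _
    have d2 : HasDerivAt (fun t : ℝ => c * t + t ^ 2 / 2) (c + t) t := by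
      have := ((hasDerivAt_id t).const_mul c).add (((hasDerivAt_pow 2 t)).div_const 2)
      exact this.congr_deriv (by norm_num)
    have d3 : HasDerivAt (fun t : ℝ => (c + t) / 2 * Real.sqrt ((a + t) * (b + t)))
        (1 / 2 * q + (c + t) / 2 * (((a + t) + (b + t)) / (2 * q))) t := by
      have hl : HasDerivAt (fun t : ℝ => (c + t) / 2) (1 / 2) t := by
        simpa using ((hasDerivAt_id t).const_add c).div_const 2
      exact hl.mul hsq
    have d4 : HasDerivAt (fun t : ℝ =>
        (b - a) ^ 2 / 8 * Real.log (c + t + Real.sqrt ((a + t) * (b + t))))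
        ((b - a) ^ 2 / 8 * ((1 + ((a + t) + (b + t)) / (2 * q)) / (c + t + q))) t := by
      have hpos : (0:ℝ) < c + t + q := by
        have : 0 < c := by rw [hc]; linarith
        linarith
      have hin : HasDerivAt (fun t : ℝ => c + t + Real.sqrt ((a + t) * (b + t)))
          (1 + ((a + t) + (b + t)) / (2 * q)) t := by
        exact (((hasDerivAt_id t).const_add c).add hsq)
      exact (hin.log hpos.ne').const_mul _
    have hsum := ((d1.sub d2).add d3).sub d4
    have heq : (b - a) ^ 2 / 8 * (1 + t)⁻¹ - (c + t)
        + (1 / 2 * q + (c + t) / 2 * (((a + t) + (b + t)) / (2 * q)))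
        - (b - a) ^ 2 / 8 * ((1 + ((a + t) + (b + t)) / (2 * q)) / (c + t + q))
        = (b - a) ^ 2 / 8 * (1 + t)⁻¹ - (c + t) + q := by
      have hpos : (0:ℝ) < c + t + q := by
        have : 0 < c := by rw [hc]; linarith
        linarith
      have step1 : (1 + ((a + t) + (b + t)) / (2 * q)) / (c + t + q) = 1 / q := by
        rw [div_eq_div_iff hpos.ne' hq.ne', hc]
        field_simp
        ring
      have step2 : 1 / 2 * q + (c + t) / 2 * (((a + t) + (b + t)) / (2 * q))
          = q + (b - a) ^ 2 / 8 * (1 / q) := by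
        rw [hc]
        field_simp
        linear_combination (-32) * hq2
      rw [step1, step2]
      ring
    rw [heq] at hsum
    exact hsum
  have hc0 : (0:ℝ) < c := by rw [hc]; linarith
  -- limits
  have h1 : Tendsto (fun t : ℝ => (c + t) / (1 + t)) atTop (𝓝 1) := ratio_tendsto' c 1
  have h3 : Tendsto (fun t : ℝ => Real.sqrt ((a + t) * (b + t)) / (1 + t)) atTop (𝓝 1) := by
    have h2 : Tendsto (fun t : ℝ => Real.sqrt ((a + t) / (1 + t) * ((b + t) / (1 + t))))
        atTop (𝓝 1) := by
      have := (Real.continuous_sqrt.tendsto ((1:ℝ) * 1)).comp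
        ((ratio_tendsto' a 1).mul (ratio_tendsto' b 1))
      simpa [Function.comp_def] using this
    apply h2.congr'
    filter_upwards [eventually_gt_atTop 0] with t ht
    have h1t : (0:ℝ) < 1 + t := by linarith
    have hat : (0:ℝ) < a + t := by linarith
    have hbt : (0:ℝ) < b + t := by linarith
    rw [show (a + t) / (1 + t) * ((b + t) / (1 + t)) = (a + t) * (b + t) / (1 + t) ^ 2 by
      rw [div_mul_div_comm, ← pow_two]]
    rw [Real.sqrt_div (by positivity), Real.sqrt_sq h1t.le]
  have hA : Tendsto (fun t : ℝ => (1 + t) / (c + t + Real.sqrt ((a + t) * (b + t))))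
      atTop (𝓝 (1 / 2)) := by
    have hden : Tendsto (fun t : ℝ =>
        (c + t) / (1 + t) + Real.sqrt ((a + t) * (b + t)) / (1 + t)) atTop (𝓝 2) := by
      have h12 := h1.add h3
      norm_num at h12
      convert h12 using 2
    have := hden.inv₀ (by norm_num)
    rw [show ((2:ℝ))⁻¹ = 1 / 2 by norm_num] at this
    apply this.congr'
    filter_upwards [eventually_gt_atTop 0] with t ht
    have h1t : (0:ℝ) < 1 + t := by linarith
    have hat : (0:ℝ) < a + t := by linarith
    have hbt : (0:ℝ) < b + t := by linarith
    have hq : (0:ℝ) ≤ Real.sqrt ((a + t) * (b + t)) := Real.sqrt_nonneg _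
    have hden0 : (0:ℝ) < c + t + Real.sqrt ((a + t) * (b + t)) := by linarith
    rw [← add_div, inv_div]
  have hB : Tendsto (fun t : ℝ =>
      (c + t) * (Real.sqrt ((a + t) * (b + t)) - (c + t))) atTop (𝓝 (-((b - a) ^ 2) / 8)) := by
    have hmul : Tendsto (fun t : ℝ => -((b - a) ^ 2) / 4 * ((c + t) / (1 + t))
        * ((1 + t) / (c + t + Real.sqrt ((a + t) * (b + t))))) atTop
        (𝓝 (-((b - a) ^ 2) / 4 * 1 * (1 / 2))) := by
      exact ((h1.const_mul _).mul hA)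
    rw [show -((b - a) ^ 2) / 4 * 1 * (1 / 2) = -((b - a) ^ 2) / 8 by ring] at hmul
    apply hmul.congr'
    filter_upwards [eventually_gt_atTop 0] with t ht
    have h1t : (0:ℝ) < 1 + t := by linarith
    have hat : (0:ℝ) < a + t := by linarith
    have hbt : (0:ℝ) < b + t := by linarith
    have hq2 : Real.sqrt ((a + t) * (b + t)) ^ 2 = (a + t) * (b + t) :=
      Real.sq_sqrt (by positivity)
    set q := Real.sqrt ((a + t) * (b + t)) with hqdef
    have hq : (0:ℝ) ≤ q := Real.sqrt_nonneg _
    have hden0 : (0:ℝ) < c + t + q := by linarith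
    have key : q - (c + t) = -((b - a) ^ 2 / 4) / (c + t + q) := by
      rw [eq_div_iff hden0.ne', hc]
      linear_combination hq2
    rw [key]
    field_simp
  have hPlim : Tendsto P atTop (𝓝 (-((b - a) ^ 2 / 8) * Real.log 2
      + ((a + b) ^ 2 / 8 - (b - a) ^ 2 / 16))) := by
    have hrhs : Tendsto (fun t : ℝ =>
        (b - a) ^ 2 / 8 * Real.log ((1 + t) / (c + t + Real.sqrt ((a + t) * (b + t))))
        + ((c + t) * (Real.sqrt ((a + t) * (b + t)) - (c + t)) + c ^ 2) / 2) atTop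
        (𝓝 ((b - a) ^ 2 / 8 * Real.log (1 / 2) + (-((b - a) ^ 2) / 8 + c ^ 2) / 2)) := by
      have hlog := ((Real.continuousAt_log (by norm_num : (1/2:ℝ) ≠ 0)).tendsto).comp hA
      exact (hlog.const_mul _).add (((hB.add_const (c ^ 2)).div_const 2))
    have : (b - a) ^ 2 / 8 * Real.log (1 / 2) + (-((b - a) ^ 2) / 8 + c ^ 2) / 2
        = -((b - a) ^ 2 / 8) * Real.log 2 + ((a + b) ^ 2 / 8 - (b - a) ^ 2 / 16) := by
      rw [one_div, Real.log_inv, hc]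
      ring
    rw [this] at hrhs
    apply hrhs.congr'
    filter_upwards [eventually_gt_atTop 0] with t ht
    have h1t : (0:ℝ) < 1 + t := by linarith
    have hat : (0:ℝ) < a + t := by linarith
    have hbt : (0:ℝ) < b + t := by linarith
    have hq : (0:ℝ) ≤ Real.sqrt ((a + t) * (b + t)) := Real.sqrt_nonneg _
    have hden0 : (0:ℝ) < c + t + Real.sqrt ((a + t) * (b + t)) := by linarith
    rw [hP]
    simp only
    rw [Real.log_div h1t.ne' hden0.ne']
    ring
  have hres := integral_Ioi_of_hasDerivAt_of_tendsto' hderiv hint hPlim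
  rw [hres, hP]
  simp only
  norm_num
  rw [hc]
  ring

theorem stmt1 (a b : ℝ) (h0 : 0 < a) (hab : a < b) :
    ∫ x in a..b, Real.log x * Real.sqrt ((b - x) * (x - a)) =
      Real.pi / 16 * (a ^ 2 + 6 * a * b + b ^ 2 - 4 * Real.sqrt (a * b) * (a + b)
        - 4 * (a - b) ^ 2 * Real.log 2
        + 2 * (a - b) ^ 2 * Real.log (a + b + 2 * Real.sqrt (a * b))) := by
  have hba : (0:ℝ) < b - a := by linarith
  set m : ℝ := min 1 a with hm
  have hm0 : 0 < m := lt_min one_pos h0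
  set F : ℝ → ℝ → ℝ := fun x t =>
    Real.sqrt ((b - x) * (x - a)) * ((1 + t)⁻¹ - (x + t)⁻¹) with hF
  have hc1 : Continuous fun y : ℝ => Real.sqrt ((b - y) * (y - a)) :=
    Real.continuous_sqrt.comp (by continuity)
  -- product integrability
  have hintF : Integrable (Function.uncurry F)
      ((volume.restrict (Ioc a b)).prod (volume.restrict (Ioi 0))) := by
    have hmeas : Measurable (Function.uncurry F) := by
      apply Measurable.mul
      · exact (hc1.comp continuous_fst).measurable
      · exact ((measurable_snd.const_add 1).inv).sub ((measurable_fst.add measurable_snd).inv)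
    have hbd : Integrable (fun z : ℝ × ℝ => ((b - a) * (b + 1)) * ((m + z.2) ^ 2)⁻¹)
        ((volume.restrict (Ioc a b)).prod (volume.restrict (Ioi 0))) := by
      have h2 : Integrable (fun t : ℝ => ((m + t) ^ 2)⁻¹) (volume.restrict (Ioi 0)) :=
        invsq_integrable m hm0
      have h1 : Integrable (fun _ : ℝ => (1:ℝ)) (volume.restrict (Ioc a b)) := by
        apply integrableOn_const measure_Ioc_lt_top.ne
      have hp := (h1.mul_prod h2).const_mul ((b - a) * (b + 1))
      simpa using hp
    apply Integrable.mono' hbd hmeas.aestronglyMeasurable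
    · rw [Measure.prod_restrict]
      filter_upwards [ae_restrict_mem (measurableSet_Ioc.prod measurableSet_Ioi)] with z hz
      obtain ⟨hz1, hz2⟩ := hz
      simp only [mem_Ioc] at hz1
      simp only [mem_Ioi] at hz2
      obtain ⟨hax, hxb⟩ := hz1
      set x := z.1
      set t := z.2
      have hxt : 0 < x + t := by linarith
      have h1t : 0 < 1 + t := by linarith
      have hmt : 0 < m + t := by linarith
      have hm1 : m + t ≤ 1 + t := by
        have := min_le_left 1 a; linarith
      have hmx : m + t ≤ x + t := by
        have := min_le_right 1 a; linarith
      have hdiff : (1 + t)⁻¹ - (x + t)⁻¹ = (x - 1) / ((1 + t) * (x + t)) := by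
        field_simp
        ring
      have hsle : Real.sqrt ((b - x) * (x - a)) ≤ b - a := by
        rw [show b - a = Real.sqrt ((b - a) ^ 2) from (Real.sqrt_sq hba.le).symm]
        apply Real.sqrt_le_sqrt
        nlinarith
      have hsnn : 0 ≤ Real.sqrt ((b - x) * (x - a)) := Real.sqrt_nonneg _
      rw [hF]
      simp only [Function.uncurry]
      rw [hdiff, Real.norm_eq_abs, abs_mul, abs_div, abs_of_nonneg hsnn,
        abs_of_pos (by positivity : (0:ℝ) < (1 + t) * (x + t))]
      rw [show ((b - a) * (b + 1)) * ((m + t) ^ 2)⁻¹ = (b - a) * ((b + 1) / (m + t) ^ 2) by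
        rw [div_eq_mul_inv]; ring]
      apply mul_le_mul hsle ?_ (by positivity) hba.le
      apply div_le_div₀ (by nlinarith) ?_ (pow_pos hmt 2) ?_
      · rw [abs_le]; constructor <;> nlinarith
      · nlinarith
  -- step 1: rewrite the integrand using log_as_integral
  rw [intervalIntegral.integral_of_le hab.le]
  rw [setIntegral_congr_fun measurableSet_Ioc (g := fun x => ∫ t in Ioi (0:ℝ), F x t)
    (fun x hx => by
      simp only [mem_Ioc] at hx
      have hx0 : 0 < x := lt_trans h0 hx.1
      rw [hF]
      simp only
      rw [MeasureTheory.integral_const_mul]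
      rw [log_as_integral x hx0]
      ring)]
  -- Fubini
  rw [MeasureTheory.integral_integral_swap hintF]
  -- inner evaluation
  have hinner : EqOn (fun t => ∫ x in Ioc a b, F x t)
      (fun t => Real.pi * ((b - a) ^ 2 / 8 * (1 + t)⁻¹ - ((a + b) / 2 + t)
        + Real.sqrt ((a + t) * (b + t)))) (Ioi 0) := by
    intro t ht
    simp only [mem_Ioi] at ht
    simp only
    rw [← intervalIntegral.integral_of_le hab.le]
    have hi1 : IntervalIntegrable (fun x => (1 + t)⁻¹ * Real.sqrt ((b - x) * (x - a)))
        volume a b := (continuous_const.mul hc1).intervalIntegrable a b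
    have hi2 : IntervalIntegrable (fun x => Real.sqrt ((b - x) * (x - a)) / (x + t))
        volume a b := by
      apply ContinuousOn.intervalIntegrable
      rw [uIcc_of_le hab.le]
      apply ContinuousOn.div hc1.continuousOn (Continuous.continuousOn (by continuity))
      intro y hy
      simp only [mem_Icc] at hy
      nlinarith [hy.1]
    have heq : ∀ x ∈ uIcc a b, F x t = (1 + t)⁻¹ * Real.sqrt ((b - x) * (x - a))
        - Real.sqrt ((b - x) * (x - a)) / (x + t) := by
      intro x hx
      rw [uIcc_of_le hab.le, mem_Icc] at hx
      have hxt : 0 < x + t := by nlinarith [hx.1]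
      rw [hF]
      simp only
      field_simp
    rw [intervalIntegral.integral_congr heq, intervalIntegral.integral_sub hi1 hi2,
      intervalIntegral.integral_const_mul, M_eval a b hab, K_eval a b t h0 hab ht.le]
    ring
  rw [setIntegral_congr_fun measurableSet_Ioi hinner]
  -- integrability of the inner function
  have hG0 : IntegrableOn (fun t => ∫ x in Ioc a b, F x t) (Ioi 0) := by
    have := hintF.integral_prod_right
    exact this
  have hG1 : IntegrableOn (fun t => Real.pi * ((b - a) ^ 2 / 8 * (1 + t)⁻¹ - ((a + b) / 2 + t)
      + Real.sqrt ((a + t) * (b + t)))) (Ioi 0) := by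
    apply hG0.congr_fun hinner measurableSet_Ioi
  have hG : IntegrableOn (fun t : ℝ => (b - a) ^ 2 / 8 * (1 + t)⁻¹ - ((a + b) / 2 + t)
      + Real.sqrt ((a + t) * (b + t))) (Ioi 0) := by
    have h2 := hG1.const_mul (Real.pi)⁻¹
    apply h2.congr
    apply Eventually.of_forall
    intro t
    simp only
    rw [← mul_assoc, inv_mul_cancel₀ Real.pi_ne_zero, one_mul]
  rw [MeasureTheory.integral_const_mul, E_eval a b h0 hab hG]
  -- final algebra with logs
  have hsab : 0 < Real.sqrt (a * b) := Real.sqrt_pos.2 (mul_pos h0 (lt_trans h0 hab))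
  rw [show a + b + 2 * Real.sqrt (a * b) = 2 * ((a + b) / 2 + Real.sqrt (a * b)) by ring,
    Real.log_mul two_ne_zero (ne_of_gt (by nlinarith))]
  ring
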